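/- Let A be a finite alphabet, S a semigroup generated by the images of A, and L ⊆ A⁺ a rational (regular) dictionary of S such that the relation R_ε^L = {(u,v) ∈ L × L : p(u) = p(v)} is rational. Then there exist a rational dictionary K ⊆ L of S and ℓ ∈ ℕ such that for all u, v ∈ K with p(u) = p(v), |u| ≤ ℓ·|v|. -/

import Mathlib

/-- Extension of a letter map `B → A*` to the induced monoid map `B* → A*`. -/
def strMap {B A : Type} (α : B → List A) (w : List B) : List A :=
  (w.map α).flatten

/-- A Nivat bimorphism: for each letter `b`, exactly one of `α b`, `β b` is the
empty word, and the other is a single letter. -/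
def NivatPair {B A : Type} (α β : B → List A) : Prop :=
  ∀ b : B, (α b = [] ∧ (β b).length = 1) ∨ ((α b).length = 1 ∧ β b = [])

/-- Evaluation of a word over `A` in a semigroup `S` (via the one-point
monoid extension `WithOne S`; nonempty words evaluate in `S` itself). -/
def evalW {A S : Type} [Semigroup S] (f : A → S) (w : List A) : WithOne S :=
  (w.map fun a => (f a : WithOne S)).prod

/-- A relation on words over `A` is rational if it is the image of a regular
language under a Nivat bimorphism. -/
def IsRationalRel {A : Type} (R : Set (List A × List A)) : Prop :=
  ∃ (B : Type) (_ : Fintype B) (H : Language B), H.IsRegular ∧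
    ∃ α β : B → List A, NivatPair α β ∧
      R = {uv | ∃ w ∈ H, uv = (strMap α w, strMap β w)}

namespace Stmt3Aux

variable {A B C T : Type}

theorem strMap_nil (g : B → List A) : strMap g [] = [] := rfl

theorem strMap_cons (g : B → List A) (b : B) (x : List B) :
    strMap g (b :: x) = g b ++ strMap g x := by simp [strMap]

theorem strMap_append (g : B → List A) (x y : List B) :
    strMap g (x ++ y) = strMap g x ++ strMap g y := by simp [strMap]

theorem strMap_map (g : C → List A) (e : B → C) (x : List B) :
    strMap g (x.map e) = strMap (g ∘ e) x := by simp [strMap, List.map_map]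

theorem strMap_pure (x : List B) : strMap (fun b => [b]) x = x := by
  induction x with
  | nil => rfl
  | cons b x ih => rw [strMap_cons, ih]; rfl

theorem strMap_eq_nil {g : B → List A} {x : List B} (h : ∀ b ∈ x, g b = []) :
    strMap g x = [] := by
  induction x with
  | nil => rfl
  | cons b x ih =>
      rw [strMap_cons, h b (by simp), ih fun c hc => h c (by simp [hc])]; rfl

theorem strMap_eq_nil_iff {g : B → List A} {x : List B} :
    strMap g x = [] ↔ ∀ b ∈ x, g b = [] := by
  constructor
  · intro h b hb
    have := List.flatten_eq_nil_iff.mp h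
    exact this _ (List.mem_map_of_mem hb)
  · exact strMap_eq_nil

theorem strMap_length {g : B → List A} {x : List B} (h : ∀ b ∈ x, (g b).length = 1) :
    (strMap g x).length = x.length := by
  induction x with
  | nil => rfl
  | cons b x ih =>
      rw [strMap_cons, List.length_append, h b (by simp),
        ih fun c hc => h c (by simp [hc]), List.length_cons, Nat.add_comm]


/-! ### DFA closure constructions -/

theorem isRegular_compl {L : Language T} (h : L.IsRegular) :
    Language.IsRegular (Lᶜ : Set (List T)) := by
  obtain ⟨σ, fσ, M, hM⟩ := h
  subst hM
  exact ⟨σ, fσ, ⟨M.step, M.start, M.acceptᶜ⟩, by ext w; exact Iff.rfl⟩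

def dfaInter {σ₁ σ₂ : Type} (M₁ : DFA T σ₁) (M₂ : DFA T σ₂) : DFA T (σ₁ × σ₂) where
  step p t := (M₁.step p.1 t, M₂.step p.2 t)
  start := (M₁.start, M₂.start)
  accept := {p | p.1 ∈ M₁.accept ∧ p.2 ∈ M₂.accept}

theorem dfaInter_evalFrom {σ₁ σ₂ : Type} (M₁ : DFA T σ₁) (M₂ : DFA T σ₂)
    (p : σ₁ × σ₂) (w : List T) :
    (dfaInter M₁ M₂).evalFrom p w = (M₁.evalFrom p.1 w, M₂.evalFrom p.2 w) := by
  induction w generalizing p with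
  | nil => rfl
  | cons t w ih => exact ih _

theorem isRegular_inter {L₁ L₂ : Language T} (h₁ : L₁.IsRegular)
    (h₂ : L₂.IsRegular) : Language.IsRegular (L₁ ∩ L₂ : Set (List T)) := by
  obtain ⟨σ₁, f₁, M₁, hM₁⟩ := h₁
  obtain ⟨σ₂, f₂, M₂, hM₂⟩ := h₂
  subst hM₁; subst hM₂
  refine ⟨σ₁ × σ₂, by infer_instance, dfaInter M₁ M₂, ?_⟩
  ext w
  change w ∈ (dfaInter M₁ M₂).accepts ↔ w ∈ M₁.accepts ∧ w ∈ M₂.accepts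
  rw [DFA.mem_accepts, DFA.mem_accepts, DFA.mem_accepts,
    DFA.eval, dfaInter_evalFrom]
  exact Iff.rfl

def dfaComap {σ : Type} (g : C → List T) (M : DFA T σ) : DFA C σ where
  step s c := M.evalFrom s (g c)
  start := M.start
  accept := M.accept

theorem dfaComap_evalFrom {σ : Type} (g : C → List T) (M : DFA T σ)
    (s : σ) (w : List C) :
    (dfaComap g M).evalFrom s w = M.evalFrom s (strMap g w) := by
  induction w generalizing s with
  | nil => rfl
  | cons c w ih =>
      rw [strMap_cons, M.evalFrom_of_append]
      exact ih _

theorem isRegular_preimage (g : C → List T) {L : Language T}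
    (h : L.IsRegular) : Language.IsRegular (strMap g ⁻¹' (L : Set (List T))) := by
  obtain ⟨σ, fσ, M, hM⟩ := h
  subst hM
  refine ⟨σ, fσ, dfaComap g M, ?_⟩
  ext w
  change w ∈ (dfaComap g M).accepts ↔ strMap g w ∈ M.accepts
  rw [DFA.mem_accepts, DFA.mem_accepts, DFA.eval, DFA.eval,
    dfaComap_evalFrom]
  exact Iff.rfl

theorem isRegular_iUnion {ι : Type} [Fintype ι] (Ls : ι → Language T)
    (h : ∀ i, (Ls i).IsRegular) :
    Language.IsRegular (⋃ i, (Ls i : Set (List T))) := by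
  classical
  choose σs fσ Ms hMs using h
  haveI : ∀ i, Fintype (σs i) := fσ
  refine ⟨∀ i, σs i, by infer_instance,
    ⟨fun f t => fun i => (Ms i).step (f i) t, fun i => (Ms i).start,
      {f | ∃ i, f i ∈ (Ms i).accept}⟩, ?_⟩
  have key : ∀ (w : List T) (f : ∀ i, σs i),
      DFA.evalFrom ⟨fun f t => fun i => (Ms i).step (f i) t, fun i => (Ms i).start,
        {f | ∃ i, f i ∈ (Ms i).accept}⟩ f w = fun i => (Ms i).evalFrom (f i) w := by
    intro w
    induction w with
    | nil => intro f; rfl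
    | cons t w ih => intro f; exact ih _
  ext w
  rw [DFA.mem_accepts, DFA.eval, key]
  constructor
  · rintro ⟨i, hi⟩
    exact Set.mem_iUnion.mpr ⟨i, by rw [← hMs i]; exact hi⟩
  · intro hw
    obtain ⟨i, hi⟩ := Set.mem_iUnion.mp hw
    exact ⟨i, by rw [← hMs i] at hi; exact hi⟩

/-- εNFA over `A` simulating the image of a DFA-language over `B` under a
letter map `g` with `|g b| ≤ 1`. -/
def imageNFA (M : DFA B σ) (g : B → List A) : εNFA A σ where
  step s c :=
    match c with
    | some a => {t | ∃ b, g b = [a] ∧ t = M.step s b}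
    | none => {t | ∃ b, g b = [] ∧ t = M.step s b}
  start := {M.start}
  accept := M.accept

theorem imageNFA_εClosure (M : DFA B σ) (g : B → List A) (S : Set σ) (t : σ) :
    t ∈ (imageNFA M g).εClosure S ↔
      ∃ s ∈ S, ∃ w : List B, (∀ b ∈ w, g b = []) ∧ M.evalFrom s w = t := by
  constructor
  · intro h
    induction h with
    | base s hs => exact ⟨s, hs, [], by simp, rfl⟩
    | step s t ht _ ih =>
        obtain ⟨s₀, hs₀, w, hw, hev⟩ := ih
        obtain ⟨b, hb, rfl⟩ := ht
        refine ⟨s₀, hs₀, w ++ [b], ?_, ?_⟩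
        · intro c hc
          rcases List.mem_append.mp hc with h' | h'
          · exact hw c h'
          · rw [List.mem_singleton.mp h']; exact hb
        · rw [DFA.evalFrom_append_singleton, hev]
  · rintro ⟨s, hs, w, hw, hev⟩
    induction w using List.reverseRecOn generalizing t with
    | nil => rw [← hev]; exact εNFA.εClosure.base s hs
    | append_singleton w b ih =>
        rw [DFA.evalFrom_append_singleton] at hev
        refine εNFA.εClosure.step (M.evalFrom s w) t ?_
          (ih (M.evalFrom s w) (fun c hc => hw c (by simp [hc])) rfl)
        exact ⟨b, hw b (by simp), hev.symm⟩

theorem split_last {g : B → List A} (hg : ∀ b, (g b).length ≤ 1) {w : List B}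
    {u : List A} {a : A} (h : strMap g w = u ++ [a]) :
    ∃ w₁ b w₂, w = w₁ ++ b :: w₂ ∧ g b = [a] ∧ strMap g w₁ = u ∧
      ∀ c ∈ w₂, g c = [] := by
  induction w using List.reverseRecOn generalizing u with
  | nil =>
      exfalso
      have : ([] : List A) = u ++ [a] := h
      simpa using congrArg List.length this
  | append_singleton w c ih =>
      rw [strMap_append] at h
      rcases Nat.le_one_iff_eq_zero_or_eq_one.mp (hg c) with h0 | h1
      · have hc : g c = [] := List.eq_nil_of_length_eq_zero h0
        rw [strMap_cons] at h
        rw [hc] at h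
        simp only [List.nil_append, List.append_nil] at h
        have h' : strMap g w = u ++ [a] := by
          simpa [strMap] using h
        obtain ⟨w₁, b, w₂, rfl, hb, hu, hw₂⟩ := ih h'
        refine ⟨w₁, b, w₂ ++ [c], by simp, hb, hu, ?_⟩
        intro d hd
        rcases List.mem_append.mp hd with h' | h'
        · exact hw₂ d h'
        · rw [List.mem_singleton.mp h']; exact hc
      · obtain ⟨x, hx⟩ : ∃ x, g c = [x] := List.length_eq_one_iff.mp h1
        have hs : strMap g ([c] : List B) = [x] := by simp [strMap, hx]
        have h' : strMap g w ++ [x] = u ++ [a] := by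
          simpa [hs] using h
        obtain ⟨h₁, h₂⟩ := List.append_inj' h' rfl
        refine ⟨w, c, [], rfl, ?_, h₁, by simp⟩
        rw [hx]; rw [List.singleton_inj.mp h₂]
  
theorem imageNFA_evalFrom (M : DFA B σ) {g : B → List A}
    (hg : ∀ b, (g b).length ≤ 1) (u : List A) (S : Set σ) (t : σ) :
    t ∈ (imageNFA M g).evalFrom S u ↔
      ∃ s ∈ S, ∃ w : List B, strMap g w = u ∧ M.evalFrom s w = t := by
  induction u using List.reverseRecOn generalizing t with
  | nil =>
      rw [εNFA.evalFrom_nil, imageNFA_εClosure]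
      constructor
      · rintro ⟨s, hs, w, hw, hev⟩
        exact ⟨s, hs, w, by
          simp only [strMap]
          exact List.flatten_eq_nil_iff.mpr fun l hl => by
            obtain ⟨b, hb, rfl⟩ := List.mem_map.mp hl; exact hw b hb, hev⟩
      · rintro ⟨s, hs, w, hw, hev⟩
        refine ⟨s, hs, w, fun b hb => ?_, hev⟩
        have := List.flatten_eq_nil_iff.mp hw
        exact this _ (List.mem_map_of_mem hb)
  | append_singleton u a ih =>
      rw [εNFA.evalFrom_append_singleton, εNFA.mem_stepSet_iff]
      constructor
      · rintro ⟨r, hr, ht⟩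
        obtain ⟨s, hs, w₁, hw₁, hev₁⟩ := (ih r).mp hr
        obtain ⟨r', hr', w₂, hw₂, hev₂⟩ := (imageNFA_εClosure M g _ t).mp ht
        obtain ⟨b, hb, rfl⟩ := hr'
        refine ⟨s, hs, w₁ ++ b :: w₂, ?_, ?_⟩
        · rw [strMap_append, strMap_cons, hw₁, hb,
            show strMap g w₂ = [] from ?_]
          · simp
          · simp only [strMap]
            exact List.flatten_eq_nil_iff.mpr fun l hl => by
              obtain ⟨c, hc, rfl⟩ := List.mem_map.mp hl; exact hw₂ c hc
        · rw [show w₁ ++ b :: w₂ = (w₁ ++ [b]) ++ w₂ by simp,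
            DFA.evalFrom_of_append, DFA.evalFrom_append_singleton, hev₁]
          exact hev₂
      · rintro ⟨s, hs, w, hw, hev⟩
        obtain ⟨w₁, b, w₂, rfl, hb, hw₁, hw₂⟩ := split_last hg hw
        refine ⟨M.evalFrom s w₁, (ih _).mpr ⟨s, hs, w₁, hw₁, rfl⟩, ?_⟩
        rw [imageNFA_εClosure]
        refine ⟨M.step (M.evalFrom s w₁) b, ⟨b, hb, rfl⟩, w₂, hw₂, ?_⟩
        rw [← hev, show w₁ ++ b :: w₂ = (w₁ ++ [b]) ++ w₂ by simp,
          DFA.evalFrom_of_append, DFA.evalFrom_append_singleton]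

theorem imageNFA_accepts (M : DFA B σ) {g : B → List A}
    (hg : ∀ b, (g b).length ≤ 1) :
    (imageNFA M g).accepts = strMap g '' M.accepts := by
  ext u
  show (∃ t ∈ (imageNFA M g).accept, t ∈ (imageNFA M g).eval u) ↔ _
  constructor
  · rintro ⟨t, hacc, ht⟩
    obtain ⟨s, hs, w, hw, hev⟩ := (imageNFA_evalFrom M hg u _ t).mp ht
    rw [Set.mem_singleton_iff.mp hs] at hev
    exact ⟨w, by change M.eval w ∈ M.accept; rw [DFA.eval, hev]; exact hacc, hw⟩
  · rintro ⟨w, hwacc, hw⟩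
    refine ⟨M.eval w, hwacc, ?_⟩
    exact (imageNFA_evalFrom M hg u _ _).mpr ⟨M.start, rfl, w, hw, rfl⟩

theorem isRegular_image {g : B → List A}
    (hg : ∀ b, (g b).length ≤ 1) {L : Language B}
    (h : L.IsRegular) : Language.IsRegular (strMap g '' (L : Set (List B))) := by
  obtain ⟨σ', fσ', M, hM⟩ := h
  subst hM
  refine ⟨Set σ', by infer_instance, (imageNFA M g).toNFA.toDFA, ?_⟩
  rw [NFA.toDFA_correct, εNFA.toNFA_correct, imageNFA_accepts M hg]

/-- marked alphabet: three copies of `B` -/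
abbrev C3 (B : Type) := Sum B (Sum B B)

def comp3 : C3 B → Fin 3 := Sum.elim (fun _ => 0) (Sum.elim (fun _ => 1) (fun _ => 2))

def base3 : C3 B → B := Sum.elim id (Sum.elim id id)

def e3 (k : Fin 3) : B → C3 B :=
  if k = 0 then Sum.inl else if k = 1 then Sum.inr ∘ Sum.inl else Sum.inr ∘ Sum.inr

theorem comp3_e3 (k : Fin 3) (b : B) : comp3 (e3 k b) = k := by
  fin_cases k <;> simp [e3, comp3]

theorem base3_e3 (k : Fin 3) (b : B) : base3 (e3 k b) = b := by
  fin_cases k <;> simp [e3, base3]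

def ordDFA (B : Type) : DFA (C3 B) (Option (Fin 3)) where
  step s c :=
    match s with
    | none => none
    | some i => if i ≤ comp3 c then some (comp3 c) else none
  start := some 0
  accept := {s | s ≠ none}

theorem ordDFA_dead (w : List (C3 B)) : (ordDFA B).evalFrom none w = none := by
  induction w with
  | nil => rfl
  | cons c w ih => exact ih

theorem ordDFA_fwd (x : List B) (k : Fin 3) :
    ∀ i : Fin 3, i ≤ k → ∃ i', i ≤ i' ∧ i' ≤ k ∧
      (ordDFA B).evalFrom (some i) (x.map (e3 k)) = some i' := by
  induction x with
  | nil => intro i hik; exact ⟨i, le_refl _, hik, rfl⟩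
  | cons b x ih =>
      intro i hik
      have hstep : (ordDFA B).step (some i) (e3 k b) = some k := by
        show (if i ≤ comp3 (e3 k b) then some (comp3 (e3 k b)) else none) = some k
        rw [comp3_e3, if_pos hik]
      have : (ordDFA B).evalFrom (some i) ((b :: x).map (e3 k)) =
          (ordDFA B).evalFrom (some k) (x.map (e3 k)) := by
        show (ordDFA B).evalFrom ((ordDFA B).step (some i) (e3 k b)) _ = _
        rw [hstep]
      obtain ⟨i', h1, h2, h3⟩ := ih k (le_refl k)
      exact ⟨i', le_trans hik h1, h2, by rw [this, h3]⟩

theorem ordDFA_bwd (w : List (C3 B)) :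
    ∀ i : Fin 3, (ordDFA B).evalFrom (some i) w ≠ none →
      ∃ x y z : List B, w = x.map (e3 0) ++ y.map (e3 1) ++ z.map (e3 2) ∧
        ((1 : Fin 3) ≤ i → x = []) ∧ ((2 : Fin 3) ≤ i → x = [] ∧ y = []) := by
  induction w with
  | nil =>
      intro i _
      exact ⟨[], [], [], rfl, fun _ => rfl, fun _ => ⟨rfl, rfl⟩⟩
  | cons c w ih =>
      intro i hne
      have hev : (ordDFA B).evalFrom (some i) (c :: w) =
          (ordDFA B).evalFrom ((ordDFA B).step (some i) c) w := rfl
      by_cases hle : i ≤ comp3 c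
      · have hstep : (ordDFA B).step (some i) c = some (comp3 c) := by
          show (if i ≤ comp3 c then some (comp3 c) else none) = _
          rw [if_pos hle]
        rw [hev, hstep] at hne
        obtain ⟨x, y, z, hw, h1, h2⟩ := ih (comp3 c) hne
        rcases c with b | b | b
        · -- comp3 c = 0
          refine ⟨b :: x, y, z, ?_, ?_, ?_⟩
          · rw [hw]; rfl
          · intro h; exfalso
            have : i ≤ (0 : Fin 3) := hle
            have h1' := Fin.le_def.mp this
            have h2' := Fin.le_def.mp h
            omega
          · intro h; exfalso
            have : i ≤ (0 : Fin 3) := hle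
            have h1' := Fin.le_def.mp this
            have h2' := Fin.le_def.mp h
            omega
        · -- comp3 c = 1
          have hx : x = [] := h1 (by exact le_refl _)
          refine ⟨[], b :: y, z, ?_, fun _ => rfl, ?_⟩
          · rw [hw, hx]; rfl
          · intro h; exfalso
            have : i ≤ (1 : Fin 3) := hle
            have h1' := Fin.le_def.mp this
            have h2' := Fin.le_def.mp h
            omega
        · -- comp3 c = 2
          obtain ⟨hx, hy⟩ := h2 (by exact le_refl _)
          refine ⟨[], [], b :: z, ?_, fun _ => rfl, fun _ => ⟨rfl, rfl⟩⟩
          rw [hw, hx, hy]; rfl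
      · exfalso
        have hstep : (ordDFA B).step (some i) c = none := by
          show (if i ≤ comp3 c then some (comp3 c) else none) = none
          rw [if_neg hle]
        rw [hev, hstep, ordDFA_dead] at hne
        exact hne rfl

theorem ordDFA_accepts (B : Type) :
    (ordDFA B).accepts = {w | ∃ x y z : List B,
      w = x.map (e3 0) ++ y.map (e3 1) ++ z.map (e3 2)} := by
  ext w
  rw [DFA.mem_accepts]
  constructor
  · intro h
    obtain ⟨x, y, z, hw, -, -⟩ := ordDFA_bwd w 0 h
    exact ⟨x, y, z, hw⟩
  · rintro ⟨x, y, z, rfl⟩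
    obtain ⟨i₁, -, hi₁, h₁⟩ := ordDFA_fwd x 0 0 (le_refl _)
    obtain ⟨i₂, -, hi₂, h₂⟩ := ordDFA_fwd y 1 i₁ (le_trans hi₁ (by decide))
    obtain ⟨i₃, -, -, h₃⟩ := ordDFA_fwd z 2 i₂ (le_trans hi₂ (by decide))
    show (ordDFA B).evalFrom (some 0) _ ∈ _
    rw [DFA.evalFrom_of_append, DFA.evalFrom_of_append, h₁, h₂, h₃]
    exact Option.some_ne_none i₃

theorem dropWhile_head_false (p : B → Bool) :
    ∀ (l : List B) (b : B) (t : List B), l.dropWhile p = b :: t → p b = false := by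
  intro l
  induction l with
  | nil => intro b t h; simp at h
  | cons a l ih =>
      intro b t h
      rw [List.dropWhile_cons] at h
      by_cases hpa : p a
      · rw [if_pos hpa] at h; exact ih b t h
      · rw [if_neg hpa] at h
        cases h
        simpa using hpa

theorem small_blocks_bound {α β : B → List A} (hN : NivatPair α β) (k : ℕ) :
    ∀ (N : ℕ) (w : List B), w.length ≤ N →
      (∀ x y z, w = x ++ y ++ z → (∀ b ∈ y, β b = []) → y.length ≤ k) →
      (strMap α w).length ≤ k * ((strMap β w).length + 1) := by
  classical
  intro N
  induction N with
  | zero =>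
      intro w hw _
      rw [List.length_eq_zero_iff.mp (Nat.le_zero.mp hw)]
      simp [strMap]
  | succ N ih =>
      intro w hw hblocks
      obtain ⟨y₀, r, hw0, hy₀, hr⟩ : ∃ y₀ r : List B, w = y₀ ++ r ∧
          (∀ b ∈ y₀, β b = []) ∧ (r = [] ∨ ∃ b w', r = b :: w' ∧ β b ≠ []) := by
        refine ⟨w.takeWhile (fun b => decide (β b = [])),
          w.dropWhile (fun b => decide (β b = [])),
          (List.takeWhile_append_dropWhile).symm, ?_, ?_⟩
        · intro b hb
          have := List.mem_takeWhile_imp hb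
          simpa using this
        · rcases hdrop : w.dropWhile (fun b => decide (β b = [])) with _ | ⟨b, w'⟩
          · exact Or.inl rfl
          · refine Or.inr ⟨b, w', rfl, ?_⟩
            have := dropWhile_head_false (fun b => decide (β b = [])) w b w' hdrop
            simpa using this
      have hy₀α : ∀ b ∈ y₀, (α b).length = 1 := by
        intro b hb
        rcases hN b with ⟨-, h2⟩ | ⟨h1, -⟩
        · exfalso; rw [hy₀ b hb] at h2; exact Nat.one_ne_zero h2.symm
        · exact h1
      have hy₀len : y₀.length ≤ k :=
        hblocks [] y₀ r (by rw [hw0]; rfl) hy₀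
      rcases hr with rfl | ⟨b, w', rfl, hbβ⟩
      · -- w = y₀
        rw [hw0, List.append_nil]
        calc (strMap α y₀).length = y₀.length := strMap_length hy₀α
          _ ≤ k := hy₀len
          _ ≤ k * ((strMap β y₀).length + 1) :=
              Nat.le_mul_of_pos_right _ (Nat.succ_pos _)
      · have hbα : α b = [] ∧ (β b).length = 1 := by
          rcases hN b with h | ⟨-, h2⟩
          · exact h
          · exact absurd h2 hbβ
        have hw'len : w'.length ≤ N := by
          have := congrArg List.length hw0
          rw [List.length_append, List.length_cons] at this
          omega
        have hblocks' : ∀ x y z, w' = x ++ y ++ z → (∀ c ∈ y, β c = []) →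
            y.length ≤ k := by
          intro x y z hxyz hy
          refine hblocks (y₀ ++ b :: x) y z ?_ hy
          rw [hw0, hxyz]
          simp
        have ihw' := ih w' hw'len hblocks'
        have hα : (strMap α w).length = y₀.length + (strMap α w').length := by
          rw [hw0, strMap_append, strMap_cons, hbα.1, List.nil_append,
            List.length_append, strMap_length hy₀α]
        have hβ : (strMap β w).length = (strMap β w').length + 1 := by
          rw [hw0, strMap_append, strMap_cons, strMap_eq_nil hy₀, List.nil_append,
            List.length_append, hbα.2]
          omega
        rw [hα, hβ]
        have hmul : k * ((strMap β w').length + 1 + 1) =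
            k * ((strMap β w').length + 1) + k := by ring
        omega

theorem exists_big_block {α β : B → List A} (hN : NivatPair α β) (k : ℕ)
    (w : List B) (h : k * ((strMap β w).length + 1) < (strMap α w).length) :
    ∃ x y z, w = x ++ y ++ z ∧ (∀ b ∈ y, β b = []) ∧ k + 1 ≤ y.length := by
  by_contra hcon
  push_neg at hcon
  have := small_blocks_bound hN k w.length w (le_refl _) ?_
  · omega
  · intro x y z hxyz hy
    have := hcon x y z hxyz hy
    omega


/-- nonempty words form a regular language. -/
theorem isRegular_ne_nil : Language.IsRegular {w : List T | w ≠ []} := by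
  refine ⟨Bool, by infer_instance, ⟨fun _ _ => true, false, {true}⟩, ?_⟩
  have htrue : ∀ w : List T,
      DFA.evalFrom ⟨fun _ _ => true, false, {true}⟩ (true : Bool) w = true := by
    intro w; induction w with
    | nil => rfl
    | cons a w ih => exact ih
  ext w
  rw [DFA.mem_accepts]
  cases w with
  | nil =>
      constructor
      · intro h; exact absurd h (by simp [DFA.eval])
      · intro h; exact absurd rfl h
  | cons a w =>
      constructor
      · intro _; exact List.cons_ne_nil a w
      · intro _
        show DFA.evalFrom _ _ (a :: w) ∈ _
        have h2 : DFA.evalFrom (⟨fun _ _ => true, false, {true}⟩ : DFA T Bool) false (a :: w) =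
            DFA.evalFrom ⟨fun _ _ => true, false, {true}⟩ (true : Bool) w := rfl
        rw [h2, htrue]
        rfl

/-- words all of whose letters satisfy `P` form a regular language. -/
theorem isRegular_all (P : T → Prop) : Language.IsRegular {w : List T | ∀ b ∈ w, P b} := by
  classical
  refine ⟨Bool, by infer_instance, ⟨fun s b => if P b then s else false, true, {true}⟩, ?_⟩
  set M : DFA T Bool := ⟨fun s b => if P b then s else false, true, {true}⟩ with hMdef
  have hfalse : ∀ w : List T, M.evalFrom false w = false := by
    intro w; induction w with
    | nil => rfl
    | cons a w ih =>
        show M.evalFrom (M.step false a) w = false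
        have : M.step false a = false := by
          show (if P a then false else false) = false
          split <;> rfl
        rw [this, ih]
  have hchar : ∀ w : List T, M.evalFrom true w = true ↔ ∀ b ∈ w, P b := by
    intro w; induction w with
    | nil => simp
    | cons a w ih =>
        constructor
        · intro h
          by_cases hPa : P a
          · have hstep : M.step true a = true := by
              show (if P a then true else false) = true
              rw [if_pos hPa]
            have : M.evalFrom true w = true := by
              have h' : M.evalFrom (M.step true a) w = true := h
              rwa [hstep] at h'
            intro b hb
            rcases List.mem_cons.mp hb with rfl | hb
            · exact hPa
            · exact (ih.mp this) b hb
          · exfalso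
            have hstep : M.step true a = false := by
              show (if P a then true else false) = false
              rw [if_neg hPa]
            have h' : M.evalFrom (M.step true a) w = true := h
            rw [hstep, hfalse] at h'
            exact Bool.false_ne_true h'
        · intro h
          have hstep : M.step true a = true := by
            show (if P a then true else false) = true
            rw [if_pos (h a (by simp))]
          show M.evalFrom (M.step true a) w = true
          rw [hstep]
          exact ih.mpr fun b hb => h b (by simp [hb])
  ext w
  rw [DFA.mem_accepts]
  show M.evalFrom true w ∈ ({true} : Set Bool) ↔ _
  rw [Set.mem_singleton_iff]
  exact hchar w

/-- the projections from the marked alphabet. -/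
def p3 (k : Fin 3) : C3 B → List B := fun c => if comp3 c = k then [base3 c] else []

theorem p3_e3 (k k' : Fin 3) (b : B) : p3 k (e3 k' b) = if k' = k then [b] else [] := by
  rw [p3, comp3_e3, base3_e3]

theorem strMap_p3_same (k : Fin 3) (x : List B) :
    strMap (p3 k) (x.map (e3 k)) = x := by
  rw [strMap_map]
  have : (p3 k ∘ e3 k : B → List B) = fun b => [b] := by
    funext b; simp [Function.comp, p3_e3]
  rw [this, strMap_pure]

theorem strMap_p3_ne {k k' : Fin 3} (h : k' ≠ k) (x : List B) :
    strMap (p3 k) (x.map (e3 k')) = [] := by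
  rw [strMap_map]
  exact strMap_eq_nil fun b _ => by simp [Function.comp, p3_e3, h]

end Stmt3Aux

open Stmt3Aux in
/-- If `L` is a rational dictionary of a semigroup `S` whose
relation `R_ε^L` is rational, then there are a rational dictionary `K ⊆ L` and
`ℓ ∈ ℕ` such that `|u| ≤ ℓ·|v|` for all `u, v ∈ K` with `p(u) = p(v)`. -/
theorem stmt3 {A S : Type} [Fintype A] [Semigroup S] (f : A → S)
    (hgen : Subsemigroup.closure (Set.range f) = ⊤)
    (L : Language A) (hLreg : L.IsRegular) (hLne : ∀ w ∈ L, w ≠ [])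
    (hLdict : ∀ s : S, ∃ w ∈ L, evalW f w = (s : WithOne S))
    (hLrat : IsRationalRel
      {uv : List A × List A | uv.1 ∈ L ∧ uv.2 ∈ L ∧ evalW f uv.1 = evalW f uv.2}) :
    ∃ (K : Language A) (ℓ : ℕ), K ≤ L ∧ K.IsRegular ∧
      (∀ s : S, ∃ w ∈ K, evalW f w = (s : WithOne S)) ∧
      ∀ u ∈ K, ∀ v ∈ K, evalW f u = evalW f v → u.length ≤ ℓ * v.length := by
  classical
  obtain ⟨B, fB, H, hHreg, α, β, hNiv, hR⟩ := hLrat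
  obtain ⟨σ', fσ', M, hM⟩ := hHreg
  haveI := fB
  haveI := fσ'
  set n := Fintype.card σ' with hn
  have hRmem : ∀ w ∈ H, strMap α w ∈ L ∧ strMap β w ∈ L ∧
      evalW f (strMap α w) = evalW f (strMap β w) := by
    intro w hw
    have h1 : ((strMap α w, strMap β w) : List A × List A) ∈
        {uv : List A × List A | ∃ w ∈ H, uv = (strMap α w, strMap β w)} := ⟨w, hw, rfl⟩
    rw [← hR] at h1
    exact h1
  have hRwit : ∀ u v : List A, u ∈ L → v ∈ L → evalW f u = evalW f v →
      ∃ w ∈ H, u = strMap α w ∧ v = strMap β w := by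
    intro u v hu hv he
    have h1 : ((u, v) : List A × List A) ∈
        {uv : List A × List A | uv.1 ∈ L ∧ uv.2 ∈ L ∧ evalW f uv.1 = evalW f uv.2} :=
      ⟨hu, hv, he⟩
    rw [hR] at h1
    obtain ⟨w, hw, heq⟩ := h1
    rw [Prod.ext_iff] at heq
    exact ⟨w, hw, heq.1, heq.2⟩
  have hα1 : ∀ b : B, β b = [] → (α b).length = 1 := by
    intro b hb
    rcases hNiv b with ⟨-, h2⟩ | ⟨h1, -⟩
    · exfalso; rw [hb] at h2; simp at h2
    · exact h1
  have hαle : ∀ b : B, (α b).length ≤ 1 := by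
    intro b; rcases hNiv b with ⟨h1, -⟩ | ⟨h1, -⟩ <;> simp [h1]
  have hαlen : ∀ y : List B, (∀ b ∈ y, β b = []) → (strMap α y).length = y.length :=
    fun y hy => strMap_length fun b hb => hα1 b (hy b hb)
  set PSem : Set (List A) := {u | ∃ q : σ', ∃ x y z : List B,
    M.eval x = q ∧ y ≠ [] ∧ (∀ b ∈ y, β b = []) ∧ M.evalFrom q y = q ∧
    M.evalFrom q z ∈ M.accept ∧ u = strMap α x ++ strMap α y ++ strMap α z}
    with hPSemdef
  -- every word of `PSem` has a strictly shorter equivalent in `L`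
  have shrink : ∀ u ∈ PSem, ∃ u', u' ∈ L ∧ evalW f u' = evalW f u ∧
      u'.length < u.length := by
    intro u hu
    obtain ⟨q, x, y, z, hx, hyne, hyβ, hyloop, hz, hueq⟩ := hu
    have hwH : x ++ y ++ z ∈ H := by
      rw [← hM, DFA.mem_accepts]
      show M.evalFrom M.start (x ++ y ++ z) ∈ M.accept
      rw [DFA.evalFrom_of_append, DFA.evalFrom_of_append]
      have hx' : M.evalFrom M.start x = q := hx
      rw [hx', hyloop]
      exact hz
    have hw'H : x ++ z ∈ H := by
      rw [← hM, DFA.mem_accepts]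
      show M.evalFrom M.start (x ++ z) ∈ M.accept
      rw [DFA.evalFrom_of_append]
      have hx' : M.evalFrom M.start x = q := hx
      rw [hx']
      exact hz
    obtain ⟨hαL, hβL, hee⟩ := hRmem _ hwH
    obtain ⟨hαL', hβL', hee'⟩ := hRmem _ hw'H
    have hβeq : strMap β (x ++ z) = strMap β (x ++ y ++ z) := by
      rw [strMap_append, strMap_append, strMap_append, strMap_eq_nil hyβ]
      simp
    have huu : strMap α (x ++ y ++ z) = u := by
      rw [strMap_append, strMap_append, hueq]
    refine ⟨strMap α (x ++ z), hαL', ?_, ?_⟩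
    · rw [hee', hβeq, ← huu, hee]
    · rw [← huu, strMap_append, strMap_append, strMap_append]
      simp only [List.length_append]
      have h1 : 1 ≤ (strMap α y).length := by
        rw [hαlen y hyβ]
        exact List.length_pos_iff.mpr hyne
      omega
  -- fat pairs of `R` put their first component in `PSem`
  have fat : ∀ u v : List A, u ∈ L → v ∈ L → evalW f u = evalW f v →
      2 * n * v.length < u.length → u ∈ PSem := by
    intro u v hu hv he hlen
    obtain ⟨w, hwH, rfl, rfl⟩ := hRwit u v hu hv he
    have hv1 : 1 ≤ (strMap β w).length :=
      List.length_pos_iff.mpr (hLne _ hv)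
    have hbig : n * ((strMap β w).length + 1) < (strMap α w).length := by
      have e1 : n * ((strMap β w).length + 1) = n * (strMap β w).length + n := by ring
      have e2 : n ≤ n * (strMap β w).length := Nat.le_mul_of_pos_right n hv1
      have e3 : 2 * n * (strMap β w).length =
          n * (strMap β w).length + n * (strMap β w).length := by ring
      omega
    obtain ⟨x, y, z, hw, hyβ, hylen⟩ := exists_big_block hNiv n w hbig
    obtain ⟨q, a, b, c, hy, -, hbne, ha, hb, hc⟩ :=
      M.evalFrom_split (x := y) (s := M.evalFrom M.start x)
        (t := M.evalFrom (M.evalFrom M.start x) y) (by omega) rfl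
    have hwacc : M.evalFrom M.start (x ++ y ++ z) ∈ M.accept := by
      have h' := hwH
      rw [← hM, DFA.mem_accepts] at h'
      rw [hw] at h'
      exact h' 
    refine ⟨q, x ++ a, b, c ++ z, ?_, hbne,
      (fun b' hb' => hyβ b' (by rw [hy]; simp [hb'])), hb, ?_, ?_⟩
    · show M.evalFrom M.start (x ++ a) = q
      rw [DFA.evalFrom_of_append]
      exact ha
    · rw [DFA.evalFrom_of_append, hc]
      rw [DFA.evalFrom_of_append, DFA.evalFrom_of_append] at hwacc
      exact hwacc
    · rw [hw, hy]
      simp [strMap_append, List.append_assoc]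
  -- `PSem` is a regular language
  have hge : ∀ (k : Fin 3) (x : List B),
      strMap (fun c : C3 B => α (base3 c)) (x.map (e3 k)) = strMap α x := by
    intro k x
    rw [strMap_map]
    congr 1
    funext b
    show α (base3 (e3 k b)) = α b
    rw [base3_e3]
  have hPreg : Language.IsRegular PSem := by
    have himg : ∀ q : σ',
        Language.IsRegular (strMap (fun c : C3 B => α (base3 c)) ''
          (({w | ∃ x y z : List B,
              w = x.map (e3 0) ++ y.map (e3 1) ++ z.map (e3 2)} ∩
            (strMap (p3 0) ⁻¹' {x : List B | M.eval x = q}) ∩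
            (strMap (p3 1) ⁻¹' (({y : List B | y ≠ []} ∩
              {y : List B | ∀ b ∈ y, β b = []}) ∩
              {y : List B | M.evalFrom q y = q})) ∩
            (strMap (p3 2) ⁻¹' {z : List B | M.evalFrom q z ∈ M.accept}))
            : Set (List (C3 B)))) := by
      intro q
      refine isRegular_image (fun c => hαle (base3 c)) ?_
      refine isRegular_inter (isRegular_inter (isRegular_inter ?_ ?_) ?_) ?_
      · exact ⟨_, by infer_instance, ordDFA B, ordDFA_accepts B⟩
      · exact isRegular_preimage _ ⟨σ', fσ', ⟨M.step, M.start, {q}⟩, by ext x; exact Iff.rfl⟩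
      · refine isRegular_preimage _ (isRegular_inter (isRegular_inter ?_ ?_) ?_)
        · exact isRegular_ne_nil
        · exact isRegular_all _
        · exact ⟨σ', fσ', ⟨M.step, q, {q}⟩, by ext x; exact Iff.rfl⟩
      · exact isRegular_preimage _ ⟨σ', fσ', ⟨M.step, q, M.accept⟩, by ext x; exact Iff.rfl⟩
    have hequal : PSem = ⋃ q : σ', (strMap (fun c : C3 B => α (base3 c)) ''
          (({w | ∃ x y z : List B,
              w = x.map (e3 0) ++ y.map (e3 1) ++ z.map (e3 2)} ∩
            (strMap (p3 0) ⁻¹' {x : List B | M.eval x = q}) ∩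
            (strMap (p3 1) ⁻¹' (({y : List B | y ≠ []} ∩
              {y : List B | ∀ b ∈ y, β b = []}) ∩
              {y : List B | M.evalFrom q y = q})) ∩
            (strMap (p3 2) ⁻¹' {z : List B | M.evalFrom q z ∈ M.accept}))
            : Set (List (C3 B)))) := by
      have c0 : ∀ x y z : List B, strMap (p3 0)
          (x.map (e3 0) ++ y.map (e3 1) ++ z.map (e3 2)) = x := by
        intro x y z
        rw [strMap_append, strMap_append, strMap_p3_same,
          strMap_p3_ne (by decide : (1 : Fin 3) ≠ 0),
          strMap_p3_ne (by decide : (2 : Fin 3) ≠ 0)]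
        simp
      have c1 : ∀ x y z : List B, strMap (p3 1)
          (x.map (e3 0) ++ y.map (e3 1) ++ z.map (e3 2)) = y := by
        intro x y z
        rw [strMap_append, strMap_append, strMap_p3_same,
          strMap_p3_ne (by decide : (0 : Fin 3) ≠ 1),
          strMap_p3_ne (by decide : (2 : Fin 3) ≠ 1)]
        simp
      have c2 : ∀ x y z : List B, strMap (p3 2)
          (x.map (e3 0) ++ y.map (e3 1) ++ z.map (e3 2)) = z := by
        intro x y z
        rw [strMap_append, strMap_append, strMap_p3_same,
          strMap_p3_ne (by decide : (0 : Fin 3) ≠ 2),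
          strMap_p3_ne (by decide : (1 : Fin 3) ≠ 2)]
        simp
      ext u
      constructor
      · rintro ⟨q, x, y, z, hx, hyne, hyβ, hyloop, hz, rfl⟩
        refine Set.mem_iUnion.mpr ⟨q,
          ⟨x.map (e3 0) ++ y.map (e3 1) ++ z.map (e3 2),
            ⟨⟨⟨⟨x, y, z, rfl⟩, ?_⟩, ?_⟩, ?_⟩, ?_⟩⟩
        · rw [Set.mem_preimage, c0 x y z]
          exact hx
        · rw [Set.mem_preimage, c1 x y z]
          exact ⟨⟨hyne, hyβ⟩, hyloop⟩
        · rw [Set.mem_preimage, c2 x y z]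
          exact hz
        · rw [strMap_append, strMap_append, hge, hge, hge]
      · intro hu
        obtain ⟨q, w, hwG, hwu⟩ := Set.mem_iUnion.mp hu
        obtain ⟨⟨⟨hOrd, h0⟩, h1⟩, h2⟩ := hwG
        obtain ⟨x, y, z, rfl⟩ := hOrd
        rw [Set.mem_preimage, c0] at h0
        rw [Set.mem_preimage, c1] at h1
        rw [Set.mem_preimage, c2] at h2
        obtain ⟨⟨hyne, hyβ⟩, hyloop⟩ := h1
        refine ⟨q, x, y, z, h0, hyne, hyβ, hyloop, h2, ?_⟩
        rw [← hwu, strMap_append, strMap_append, hge, hge, hge]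
    rw [hequal]
    exact isRegular_iUnion _ himg
  refine ⟨{u | u ∈ L ∧ u ∉ PSem}, 2 * n, fun u hu => hu.1, ?_, ?_, ?_⟩
  · exact isRegular_inter hLreg (isRegular_compl hPreg)
  · intro s
    obtain ⟨u₀, hu₀L, hu₀e⟩ := hLdict s
    have hex : ∃ m : ℕ, ∃ u : List A,
        (u ∈ L ∧ evalW f u = (s : WithOne S)) ∧ u.length = m :=
      ⟨u₀.length, u₀, ⟨hu₀L, hu₀e⟩, rfl⟩
    obtain ⟨u₁, ⟨hu₁L, hu₁e⟩, hu₁len⟩ := Nat.find_spec hex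
    refine ⟨u₁, ⟨hu₁L, ?_⟩, hu₁e⟩
    intro hP
    obtain ⟨u', hu'L, hu'e, hu'len⟩ := shrink u₁ hP
    have hmin : Nat.find hex ≤ u'.length :=
      Nat.find_min' hex ⟨u', ⟨hu'L, by rw [hu'e, hu₁e]⟩, rfl⟩
    omega
  · intro u hu v hv he
    by_contra hcon
    push_neg at hcon
    exact hu.2 (fat u v hu.1 hv.1 he hcon)
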